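/- arXiv:1310.4519 — 2 statements merged into one kernel-verified Lean document; each statement's English description precedes it below -/
import Mathlib

section
/- The sum $h^n_1 \otimes h^n_1 + \sum_{k=2}^n h^n_k \otimes h^n_k + \sum_{k\neq j} f^n_{k,j} \otimes f^n_{k,j}$ over all generalized Gell-Mann matrices (including the normalized identity $h^n_1$) equals $2P$, where $P = \sum_{k,j=1}^n e_{jk} \otimes e_{kj}$ is the permutation (swap) matrix on $\mathbb{C}^n \otimes \mathbb{C}^n$. -/
open Matrix Kronecker

/-- Diagonal generalized Gell-Mann matrices over ℂ (0-based index; `k = 0` gives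
`h^n_1 = √(2/n)·I`). -/
noncomputable def gellMannDiagC (n : ℕ) (k : Fin n) : Matrix (Fin n) (Fin n) ℂ :=
  if k.val = 0 then
    (Real.sqrt (2 / (n : ℝ)) : ℂ) • ∑ i : Fin n, single i i (1 : ℂ)
  else
    (Real.sqrt (2 / (((k.val : ℝ) + 1) * (k.val : ℝ))) : ℂ) •
        ∑ i ∈ Finset.univ.filter (fun i : Fin n => i.val < k.val), single i i (1 : ℂ)
      - (Real.sqrt (2 - 2 / ((k.val : ℝ) + 1)) : ℂ) • single k k (1 : ℂ)

/-- Off-diagonal generalized Gell-Mann matrices. -/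
noncomputable def gellMannOffC (n : ℕ) (k j : Fin n) : Matrix (Fin n) (Fin n) ℂ :=
  if k < j then single k j (1 : ℂ) + single j k (1 : ℂ)
  else (-Complex.I) • (single j k (1 : ℂ) - single k j (1 : ℂ))

/-! ### Auxiliary material -/

noncomputable def dE (n k a : ℕ) : ℝ :=
  if k = 0 then Real.sqrt (2 / n)
  else if a < k then Real.sqrt (2 / ((k+1)*k))
  else if a = k then -Real.sqrt (2 - 2/(k+1))
  else 0

lemma tele (b : ℕ) : ∀ n, b < n →
    ∑ k ∈ Finset.Ico (b+1) n, (2 / (((k:ℝ)+1)*k)) = 2/(b+1) - 2/n := by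
  intro n
  induction n with
  | zero => omega
  | succ m ih =>
    intro h
    rcases Nat.lt_or_ge b m with hm | hm
    · rw [Finset.sum_Ico_succ_top (by omega), ih hm]
      have hm1 : (1:ℝ) ≤ m := by exact_mod_cast Nat.one_le_iff_ne_zero.mpr (by omega)
      have h0 : (m:ℝ) ≠ 0 := by positivity
      have h1 : (m:ℝ) + 1 ≠ 0 := by positivity
      push_cast; field_simp; ring
    · have : b = m := by omega
      subst this; simp [Finset.Ico_self]

lemma sub_nonneg' (b : ℕ) : (0:ℝ) ≤ 2 - 2/(b+1) := by
  have : (2:ℝ)/(b+1) ≤ 2/1 := by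
    apply div_le_div_of_nonneg_left (by norm_num) (by norm_num)
    exact_mod_cast Nat.le_add_left 1 b
  linarith

lemma cross (b : ℕ) (hb : 1 ≤ b) :
    Real.sqrt (2 / (((b:ℝ)+1)*b)) * Real.sqrt (2 - 2/((b:ℝ)+1)) = 2/((b:ℝ)+1) := by
  rw [← Real.sqrt_mul (by positivity)]
  have hb0 : (b:ℝ) ≠ 0 := by exact_mod_cast Nat.one_le_iff_ne_zero.mp hb
  have hb1 : (b:ℝ) + 1 ≠ 0 := by positivity
  have : 2 / (((b:ℝ)+1)*b) * (2 - 2/((b:ℝ)+1)) = (2/((b:ℝ)+1))^2 := by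
    field_simp; ring
  rw [this, Real.sqrt_sq (by positivity)]

lemma diagSum (n a b : ℕ) (hab : a ≤ b) (hb : b < n) :
    ∑ k ∈ Finset.range n, dE n k a * dE n k b = if a = b then 2 else 0 := by
  have hn0 : (n:ℝ) ≠ 0 := by
    have : 0 < n := by omega
    positivity
  have hrw : ∑ k ∈ Finset.range n, dE n k a * dE n k b
      = dE n 0 a * dE n 0 b
        + (∑ k ∈ Finset.Ico 1 (b+1), dE n k a * dE n k b)
        + (∑ k ∈ Finset.Ico (b+1) n, dE n k a * dE n k b) := by
    rw [Finset.range_eq_Ico, ← Finset.sum_Ico_consecutive _ (Nat.zero_le 1) (by omega),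
        ← Finset.sum_Ico_consecutive _ (by omega : 1 ≤ b+1) (by omega)]
    simp [add_assoc]
  rw [hrw]
  have h0 : dE n 0 a * dE n 0 b = 2/n := by
    simp only [dE, if_pos rfl]
    exact Real.mul_self_sqrt (by positivity)
  have htail : (∑ k ∈ Finset.Ico (b+1) n, dE n k a * dE n k b) = 2/(b+1) - 2/n := by
    rw [← tele b n hb]
    apply Finset.sum_congr rfl
    intro k hk
    simp only [Finset.mem_Ico] at hk
    have hk0 : k ≠ 0 := by omega
    have hak : a < k := by omega
    have hbk : b < k := by omega
    simp only [dE, if_neg hk0, if_pos hak, if_pos hbk]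
    rw [Real.mul_self_sqrt (by positivity)]
  rw [h0, htail]
  rcases Nat.eq_zero_or_pos b with hb0 | hbpos
  · subst hb0
    have ha0 : a = 0 := by omega
    subst ha0
    simp [Finset.Ico_self]
  · have hmid : (∑ k ∈ Finset.Ico 1 (b+1), dE n k a * dE n k b) = dE n b a * dE n b b := by
      apply Finset.sum_eq_single_of_mem b (by simp [Finset.mem_Ico]; omega)
      intro k hk hkb
      simp only [Finset.mem_Ico] at hk
      have : ¬ b < k := by omega
      have hk0 : k ≠ 0 := by omega
      simp only [dE, if_neg hk0, if_neg this]
      rcases Nat.decEq b k with h | h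
      · simp [if_neg (by omega : ¬ b = k)]
      · simp [if_neg (by omega : ¬ b = k)]
    rw [hmid]
    have hbb : dE n b b = -Real.sqrt (2 - 2/((b:ℝ)+1)) := by
      simp [dE, Nat.one_le_iff_ne_zero.mp hbpos, lt_irrefl]
    rcases Nat.lt_or_ge a b with hab' | hab'
    · have hba : dE n b a = Real.sqrt (2 / (((b:ℝ)+1)*b)) := by
        simp [dE, Nat.one_le_iff_ne_zero.mp hbpos, hab']
      rw [hba, hbb, if_neg (by omega : ¬ a = b)]
      rw [mul_neg, cross b hbpos]
      ring
    · have hab2 : a = b := by omega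
      rw [if_pos hab2, hab2, hbb, neg_mul_neg, Real.mul_self_sqrt (sub_nonneg' b)]
      ring

lemma diagSum' (n a b : ℕ) (ha : a < n) (hb : b < n) :
    ∑ k ∈ Finset.range n, dE n k a * dE n k b = if a = b then 2 else 0 := by
  rcases le_total a b with h | h
  · exact diagSum n a b h hb
  · rw [show (∑ k ∈ Finset.range n, dE n k a * dE n k b)
        = ∑ k ∈ Finset.range n, dE n k b * dE n k a from
      Finset.sum_congr rfl (fun k _ => mul_comm _ _), diagSum n b a h ha]
    simp [eq_comm]

lemma gdiag_apply (n : ℕ) (k a c : Fin n) :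
    gellMannDiagC n k a c = if a = c then ((dE n k.val a.val : ℝ) : ℂ) else 0 := by
  rcases Nat.eq_zero_or_pos k.val with h0 | hpos
  · simp only [gellMannDiagC, dE, if_pos h0, Matrix.smul_apply, Matrix.sum_apply,
      single, of_apply]
    by_cases hac : a = c
    · subst hac
      rw [Finset.sum_eq_single a (by intro i _ hi; simp [hi]) (by simp)]
      simp
    · rw [Finset.sum_eq_zero (by intro i _; simp; intro h1 h2; exact absurd (h1 ▸ h2) hac)]
      simp [hac]
  · have hk0 : k.val ≠ 0 := by omega
    simp only [gellMannDiagC, dE, if_neg hk0, Matrix.sub_apply, Matrix.smul_apply,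
      Matrix.sum_apply, single, of_apply]
    by_cases hac : a = c
    · subst hac
      by_cases hlt : a.val < k.val
      · have hne : a ≠ k := by intro h; rw [h] at hlt; omega
        rw [Finset.sum_eq_single_of_mem a (Finset.mem_filter.mpr ⟨Finset.mem_univ a, hlt⟩)
          (by intro i _ hi; simp [hi])]
        simp [hlt, hne, Ne.symm hne]
      · by_cases heq : a = k
        · rw [Finset.sum_eq_zero (by intro i hi; rw [Finset.mem_filter] at hi; simp; intro h1; subst h1; omega)]
          subst heq
          simp [hlt]
        · have : ¬ a.val = k.val := by simp [Fin.val_eq_val, heq]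
          rw [Finset.sum_eq_zero (by intro i hi; rw [Finset.mem_filter] at hi; simp; intro h1; subst h1; omega)]
          simp [hlt, this, Ne.symm heq, heq]
    · rw [Finset.sum_eq_zero (by intro i _; simp; intro h1 h2; exact absurd (h1 ▸ h2) hac)]
      simp [hac]
      intro h1 h2; exact absurd (h1 ▸ h2) hac

lemma lemA (n : ℕ) :
    (∑ k : Fin n, gellMannDiagC n k ⊗ₖ gellMannDiagC n k)
    = (2:ℂ) • ∑ k : Fin n, single k k (1:ℂ) ⊗ₖ single k k (1:ℂ) := by
  ext ⟨a,b⟩ ⟨c,d⟩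
  simp only [Matrix.sum_apply, Matrix.smul_apply, kroneckerMap_apply]
  by_cases hac : a = c
  · by_cases hbd : b = d
    · subst hac; subst hbd
      simp only [gdiag_apply, eq_self_iff_true, if_true]
      have hL : (∑ k : Fin n, ((dE n k.val a.val : ℝ):ℂ) * ((dE n k.val b.val : ℝ):ℂ))
          = (((if a.val = b.val then (2:ℝ) else 0) : ℝ) : ℂ) := by
        rw [← diagSum' n a.val b.val a.isLt b.isLt, ← Fin.sum_univ_eq_sum_range
          (fun k => dE n k a.val * dE n k b.val) n]
        push_cast
        rfl
      rw [hL]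
      have hR : (∑ k : Fin n, single k k (1:ℂ) a a * single k k (1:ℂ) b b)
          = if a = b then 1 else 0 := by
        by_cases hab : a = b
        · subst hab
          rw [Finset.sum_eq_single_of_mem a (Finset.mem_univ a)
            (by intro i _ hi; simp [single, of_apply, hi])]
          simp [single, of_apply]
        · rw [Finset.sum_eq_zero]
          · simp [hab]
          · intro i _
            by_cases hia : i = a
            · subst hia; simp [single, of_apply, hab]
            · simp [single, of_apply, hia]
      rw [hR]
      by_cases hab : a = b
      · simp [hab]
      · simp [hab, Fin.val_eq_val, hab]
    · rw [Finset.sum_eq_zero (fun k _ => by simp [gdiag_apply, hbd]), Finset.sum_eq_zero]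
      · simp
      · intro i _
        by_cases hib : i = b
        · subst hib; simp [single, of_apply, hbd]
        · simp [single, of_apply, hib]
  · rw [Finset.sum_eq_zero (fun k _ => by simp [gdiag_apply, hac]), Finset.sum_eq_zero]
    · simp
    · intro i _
      by_cases hia : i = a
      · subst hia; simp [single, of_apply, hac]
      · simp [single, of_apply, hia]

lemma subk {m : Type*} (A B : Matrix m m ℂ) (C : Matrix m m ℂ) :
    (A - B) ⊗ₖ C = A ⊗ₖ C - B ⊗ₖ C := by
  ext ⟨a,b⟩ ⟨c,d⟩; simp [kroneckerMap_apply, sub_mul]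

lemma ksub {m : Type*} (A : Matrix m m ℂ) (B C : Matrix m m ℂ) :
    A ⊗ₖ (B - C) = A ⊗ₖ B - A ⊗ₖ C := by
  ext ⟨a,b⟩ ⟨c,d⟩; simp [kroneckerMap_apply, mul_sub]

lemma offPair (n : ℕ) (k j : Fin n) (h : k < j) :
    gellMannOffC n k j ⊗ₖ gellMannOffC n k j + gellMannOffC n j k ⊗ₖ gellMannOffC n j k
    = (2:ℂ) • (single j k (1:ℂ) ⊗ₖ single k j 1
        + single k j (1:ℂ) ⊗ₖ single j k 1) := by
  rw [gellMannOffC, gellMannOffC, if_pos h, if_neg (asymm h)]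
  rw [smul_kronecker, kronecker_smul, smul_smul]
  have hI : (-Complex.I) * (-Complex.I) = -1 := by simp [Complex.I_mul_I]
  rw [hI]
  simp only [add_kronecker, kronecker_add, subk, ksub]
  module

lemma lemB (n : ℕ) :
    (∑ p ∈ Finset.univ.filter (fun p : Fin n × Fin n => p.1 ≠ p.2),
        gellMannOffC n p.1 p.2 ⊗ₖ gellMannOffC n p.1 p.2)
    = (2:ℂ) • ∑ p ∈ Finset.univ.filter (fun p : Fin n × Fin n => p.1 ≠ p.2),
        single p.2 p.1 (1:ℂ) ⊗ₖ single p.1 p.2 (1:ℂ) := by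
  have hset : (Finset.univ.filter (fun p : Fin n × Fin n => p.1 ≠ p.2))
      = (Finset.univ.filter (fun p : Fin n × Fin n => p.1 < p.2))
        ∪ (Finset.univ.filter (fun p : Fin n × Fin n => p.2 < p.1)) := by
    ext p
    simp only [Finset.mem_filter, Finset.mem_union, Finset.mem_univ, true_and]
    constructor
    · exact fun h => lt_or_gt_of_ne h
    · rintro (h | h)
      · exact ne_of_lt h
      · exact (ne_of_lt h).symm
  have hdisj : Disjoint (Finset.univ.filter (fun p : Fin n × Fin n => p.1 < p.2))
      (Finset.univ.filter (fun p : Fin n × Fin n => p.2 < p.1)) := by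
    rw [Finset.disjoint_left]
    intro p hp hq
    simp only [Finset.mem_filter] at hp hq
    exact absurd (hp.2.trans hq.2) (lt_irrefl _)
  have hswap : ∀ (F : Fin n × Fin n → Matrix (Fin n × Fin n) (Fin n × Fin n) ℂ),
      (∑ p ∈ Finset.univ.filter (fun p : Fin n × Fin n => p.2 < p.1), F p)
      = ∑ p ∈ Finset.univ.filter (fun p : Fin n × Fin n => p.1 < p.2), F p.swap := by
    intro F
    apply Finset.sum_nbij' (fun p => p.swap) (fun p => p.swap)
    · intro p hp; simp only [Finset.mem_filter, Finset.mem_univ, true_and] at hp ⊢; exact hp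
    · intro p hp; simp only [Finset.mem_filter, Finset.mem_univ, true_and] at hp ⊢; exact hp
    · intro p _; simp
    · intro p _; simp
    · intro p _; rfl
  rw [hset, Finset.sum_union hdisj, Finset.sum_union hdisj, hswap, hswap,
    ← Finset.sum_add_distrib, ← Finset.sum_add_distrib, Finset.smul_sum]
  apply Finset.sum_congr rfl
  intro p hp
  simp only [Finset.mem_filter] at hp
  simp only [Prod.fst_swap, Prod.snd_swap, offPair n p.1 p.2 hp.2, smul_add]

/-- The full sum over all generalized Gell-Mann matrices (including `h^n_1`) of
`t ⊗ t` equals `2P`, the doubled permutation matrix. -/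
theorem stmt2 (n : ℕ) (hn : 1 ≤ n) :
    (∑ k : Fin n, gellMannDiagC n k ⊗ₖ gellMannDiagC n k)
      + ∑ p ∈ Finset.univ.filter (fun p : Fin n × Fin n => p.1 ≠ p.2),
          gellMannOffC n p.1 p.2 ⊗ₖ gellMannOffC n p.1 p.2
    = (2 : ℂ) • ∑ k : Fin n, ∑ j : Fin n,
        single j k (1 : ℂ) ⊗ₖ single k j (1 : ℂ) := by
  rw [lemA, lemB]
  rw [show (∑ k : Fin n, ∑ j : Fin n,
        single j k (1 : ℂ) ⊗ₖ single k j (1 : ℂ))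
      = ∑ p : Fin n × Fin n, single p.2 p.1 (1:ℂ) ⊗ₖ single p.1 p.2 (1:ℂ)
    by rw [Fintype.sum_prod_type]]
  rw [← Finset.sum_filter_add_sum_filter_not Finset.univ
    (fun p : Fin n × Fin n => p.1 = p.2)]
  have hdiag : (∑ p ∈ Finset.univ.filter (fun p : Fin n × Fin n => p.1 = p.2),
      single p.2 p.1 (1:ℂ) ⊗ₖ single p.1 p.2 (1:ℂ))
      = ∑ k : Fin n, single k k (1:ℂ) ⊗ₖ single k k (1:ℂ) := by
    apply Finset.sum_nbij' (fun p => p.1) (fun k => (k, k))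
    · intro p hp; simp
    · intro k _; simp
    · intro p hp; simp only [Finset.mem_filter] at hp; exact Prod.ext rfl hp.2
    · intro k _; rfl
    · intro p hp; simp only [Finset.mem_filter] at hp; rw [← hp.2]
  rw [smul_add, hdiag]
end

section
/- Let $A, B \in Sp(2n,\mathbb{R})$ and let $\chi$ be the defect matrix $\chi = \sum_{1\le i<j\le n}(e_{i,j+n}\otimes e_{i+n,j} + e_{j,i+n}\otimes e_{j+n,i} + e_{j+n,i}\otimes e_{j,i+n} + e_{i+n,j}\otimes e_{i,j+n} - e_{ij}\otimes e_{i+n,j+n} - e_{j+n,i+n}\otimes e_{ji} - e_{ji}\otimes e_{j+n,i+n} - e_{i+n,j+n}\otimes e_{ij}) + \sum_{1\le k\le n}(e_{k,n+k}\otimes e_{n+k,k} + e_{n+k,k}\otimes e_{k,n+k} - e_{kk}\otimes e_{k+n,k+n} - e_{k+n,k+n}\otimes e_{kk})$. Then $\operatorname{tr}_{12}[(A\otimes B)\chi] = -\operatorname{tr}(AB^{-1})$. -/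
open Matrix Kronecker

/-- The standard symplectic form on `ℝ^{2n}`, indexed by `Fin n ⊕ Fin n`. -/
noncomputable def sympJ (n : ℕ) : Matrix (Fin n ⊕ Fin n) (Fin n ⊕ Fin n) ℝ :=
  fromBlocks 0 1 (-1) 0

/-- Matrix unit for `2n × 2n` matrices indexed by `Fin n ⊕ Fin n`: index `Sum.inl i`
corresponds to `i` and `Sum.inr i` to `i + n`. -/
noncomputable def E2n (n : ℕ) (a b : Fin n ⊕ Fin n) : Matrix (Fin n ⊕ Fin n) (Fin n ⊕ Fin n) ℝ :=
  Matrix.single a b 1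

/-- The `Sp(2n,ℝ)` defect matrix `χ`. -/
noncomputable def sympDefect (n : ℕ) :
    Matrix ((Fin n ⊕ Fin n) × (Fin n ⊕ Fin n)) ((Fin n ⊕ Fin n) × (Fin n ⊕ Fin n)) ℝ :=
  (∑ p ∈ Finset.univ.filter (fun p : Fin n × Fin n => p.1 < p.2),
      (E2n n (Sum.inl p.1) (Sum.inr p.2) ⊗ₖ E2n n (Sum.inr p.1) (Sum.inl p.2)
        + E2n n (Sum.inl p.2) (Sum.inr p.1) ⊗ₖ E2n n (Sum.inr p.2) (Sum.inl p.1)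
        + E2n n (Sum.inr p.2) (Sum.inl p.1) ⊗ₖ E2n n (Sum.inl p.2) (Sum.inr p.1)
        + E2n n (Sum.inr p.1) (Sum.inl p.2) ⊗ₖ E2n n (Sum.inl p.1) (Sum.inr p.2)
        - E2n n (Sum.inl p.1) (Sum.inl p.2) ⊗ₖ E2n n (Sum.inr p.1) (Sum.inr p.2)
        - E2n n (Sum.inr p.2) (Sum.inr p.1) ⊗ₖ E2n n (Sum.inl p.2) (Sum.inl p.1)
        - E2n n (Sum.inl p.2) (Sum.inl p.1) ⊗ₖ E2n n (Sum.inr p.2) (Sum.inr p.1)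
        - E2n n (Sum.inr p.1) (Sum.inr p.2) ⊗ₖ E2n n (Sum.inl p.1) (Sum.inl p.2)))
    + ∑ k : Fin n,
        (E2n n (Sum.inl k) (Sum.inr k) ⊗ₖ E2n n (Sum.inr k) (Sum.inl k)
          + E2n n (Sum.inr k) (Sum.inl k) ⊗ₖ E2n n (Sum.inl k) (Sum.inr k)
          - E2n n (Sum.inl k) (Sum.inl k) ⊗ₖ E2n n (Sum.inr k) (Sum.inr k)
          - E2n n (Sum.inr k) (Sum.inr k) ⊗ₖ E2n n (Sum.inl k) (Sum.inl k))


lemma trace_mul_E {n : ℕ} (M : Matrix (Fin n ⊕ Fin n) (Fin n ⊕ Fin n) ℝ) (a b : Fin n ⊕ Fin n) :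
    (M * E2n n a b).trace = M b a := by
  simp [E2n, Matrix.trace, Matrix.diag, mul_apply, Matrix.single, Matrix.of_apply,
    Finset.sum_ite_eq, ite_and]

lemma key_trace {n : ℕ} (A B : Matrix (Fin n ⊕ Fin n) (Fin n ⊕ Fin n) ℝ)
    (a b c d : Fin n ⊕ Fin n) :
    ((A ⊗ₖ B) * (E2n n a b ⊗ₖ E2n n c d)).trace = A b a * B d c := by
  rw [← Matrix.mul_kronecker_mul, Matrix.trace_kronecker, trace_mul_E, trace_mul_E]

lemma sum_pairs {n : ℕ} (f : Fin n → Fin n → ℝ) :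
    (∑ p ∈ Finset.univ.filter (fun p : Fin n × Fin n => p.1 < p.2), (f p.1 p.2 + f p.2 p.1))
      + ∑ k, f k k = ∑ p : Fin n × Fin n, f p.1 p.2 := by
  rw [← Finset.sum_filter_add_sum_filter_not Finset.univ
      (fun p : Fin n × Fin n => p.1 < p.2) (fun p => f p.1 p.2)]
  rw [Finset.sum_add_distrib, add_assoc]
  congr 1
  have hset : Finset.univ.filter (fun p : Fin n × Fin n => ¬ p.1 < p.2)
      = Finset.univ.filter (fun p : Fin n × Fin n => p.2 < p.1)
        ∪ Finset.univ.filter (fun p : Fin n × Fin n => p.1 = p.2) := by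
    ext p
    simp only [Finset.mem_filter, Finset.mem_union, Finset.mem_univ, true_and, not_lt]
    constructor
    · intro h
      rcases lt_or_eq_of_le h with h | h
      · exact Or.inl h
      · exact Or.inr h.symm
    · rintro (h | h)
      · exact h.le
      · exact h.ge
  rw [hset, Finset.sum_union]
  · congr 1
    · refine Finset.sum_nbij' (fun p => Prod.swap p) (fun p => Prod.swap p) ?_ ?_ ?_ ?_ ?_ <;>
        simp [Prod.swap]
    · refine Finset.sum_nbij' (fun k => ((k, k) : Fin n × Fin n)) (fun p => p.1) ?_ ?_ ?_ ?_ ?_ <;>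
        simp +contextual [eq_comm]
  · rw [Finset.disjoint_filter]
    intro p _ h
    exact h.ne'

lemma JJ (n : ℕ) : sympJ n * sympJ n = -1 := by
  simp only [sympJ, Matrix.fromBlocks_multiply]
  rw [show ((-1 : Matrix ((Fin n ⊕ Fin n)) ((Fin n ⊕ Fin n)) ℝ))
      = fromBlocks (-1) 0 0 (-1) by rw [← Matrix.fromBlocks_one, Matrix.fromBlocks_neg]; simp]
  simp

lemma Binv {n : ℕ} (B : Matrix (Fin n ⊕ Fin n) (Fin n ⊕ Fin n) ℝ)
    (hB : Bᵀ * sympJ n * B = sympJ n) : B⁻¹ = -(sympJ n * Bᵀ * sympJ n) := by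
  apply Matrix.inv_eq_left_inv
  calc -(sympJ n * Bᵀ * sympJ n) * B = -(sympJ n * (Bᵀ * sympJ n * B)) := by
        simp [Matrix.mul_assoc]
    _ = 1 := by rw [hB, JJ]; simp

/-- For `A, B ∈ Sp(2n,ℝ)` and the defect matrix `χ`: `tr₁₂[(A⊗B)χ] = -tr(AB⁻¹)`. -/
theorem stmt11 (n : ℕ) (A B : Matrix (Fin n ⊕ Fin n) (Fin n ⊕ Fin n) ℝ)
    (hA : Aᵀ * sympJ n * A = sympJ n) (hB : Bᵀ * sympJ n * B = sympJ n) :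
    ((A ⊗ₖ B) * sympDefect n).trace = -(A * B⁻¹).trace := by
  rw [Binv B hB, Matrix.mul_neg, Matrix.trace_neg, neg_neg]
  set f : Fin n → Fin n → ℝ := fun i k =>
    A (Sum.inr k) (Sum.inl i) * B (Sum.inl k) (Sum.inr i)
      + A (Sum.inl k) (Sum.inr i) * B (Sum.inr k) (Sum.inl i)
      - A (Sum.inl k) (Sum.inl i) * B (Sum.inr k) (Sum.inr i)
      - A (Sum.inr k) (Sum.inr i) * B (Sum.inl k) (Sum.inl i) with hf
  have hL : ((A ⊗ₖ B) * sympDefect n).trace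
      = (∑ p ∈ Finset.univ.filter (fun p : Fin n × Fin n => p.1 < p.2),
          (f p.1 p.2 + f p.2 p.1)) + ∑ k, f k k := by
    simp only [sympDefect, Matrix.mul_add, Matrix.mul_sub, Matrix.mul_sum, Matrix.trace_add,
      Matrix.trace_sub, Matrix.trace_sum, key_trace, hf]
    congr 1
    refine Finset.sum_congr rfl fun p _ => ?_
    ring
  have hR : (A * (sympJ n * Bᵀ * sympJ n)).trace = ∑ k : Fin n, ∑ a : Fin n, f a k := by
    simp only [hf]
    simp [Matrix.trace, Matrix.diag, mul_apply, sympJ, Fintype.sum_sum_type,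
      Matrix.fromBlocks_apply₁₁, Matrix.fromBlocks_apply₁₂, Matrix.fromBlocks_apply₂₁,
      Matrix.fromBlocks_apply₂₂, Matrix.one_apply, Finset.sum_ite_eq, Finset.sum_ite_eq',
      Finset.mul_sum, Finset.sum_mul, mul_ite, ite_mul, Finset.sum_sub_distrib,
      Finset.sum_add_distrib]
    ring
  rw [hL, sum_pairs, hR, Fintype.sum_prod_type, Finset.sum_comm]
end
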